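/- Let p > 0 be a continuous symmetric probability density on (-1,1) with p(x) → 0 as x → 1⁻, monotone decreasing on [A, 1) for some A ∈ (0,1). Then any optimal sequence of turning points (xₖ) for the linear search problem does not terminate: xₖ < 1 for all k. -/

import Mathlib

open MeasureTheory Filter Set intervalIntegral

/-- For a continuous symmetric density `p > 0` on `(-1,1)` with
`p(x) → 0` as `x → 1⁻` and `p` monotone decreasing on `[A,1)`, any optimal sequence
of turning points for the linear search problem does not terminate: `xₖ < 1` for
all `k`. -/
theorem stmt_15
    (p : ℝ → ℝ)
    (hcont : ContinuousOn p (Set.Ioo (-1:ℝ) 1))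
    (hpos : ∀ x ∈ Set.Ioo (-1:ℝ) 1, 0 < p x)
    (hsymm : ∀ x, p (-x) = p x)
    (hprob : ∫ t in (-1:ℝ)..1, p t = 1)
    (hlim : Tendsto p (nhdsWithin 1 (Set.Iio 1)) (nhds 0))
    (A : ℝ) (hA : A ∈ Set.Ioo (0:ℝ) 1)
    (hanti : AntitoneOn p (Set.Ico A 1))
    (G : ℝ → ℝ) (hG : ∀ x, G x = ∫ t in x..(1:ℝ), p t)
    (x : ℕ → ℝ) (hx0 : x 0 = 0) (hmono : Monotone x)
    (hrange : ∀ k, x k ∈ Set.Icc (0:ℝ) 1)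
    (hsum : Summable (fun k => x (k + 1) * (G (x (k + 1)) + G (x k))))
    (hopt : ∀ y : ℕ → ℝ, y 0 = 0 → Monotone y → (∀ k, y k ∈ Set.Icc (0:ℝ) 1) →
      Summable (fun k => y (k + 1) * (G (y (k + 1)) + G (y k))) →
      (∑' k, x (k + 1) * (G (x (k + 1)) + G (x k))) ≤
        ∑' k, y (k + 1) * (G (y (k + 1)) + G (y k))) :
    ∀ k, x k < 1 := by
  by_contra hcon
  push_neg at hcon
  have hex : ∃ k, x k = 1 := by
    obtain ⟨k, hk⟩ := hcon
    exact ⟨k, le_antisymm (hrange k).2 hk⟩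
  classical
  set N := Nat.find hex with hNdef
  have hN : x N = 1 := Nat.find_spec hex
  have hmin : ∀ m < N, x m ≠ 1 := fun m hm => Nat.find_min hex hm
  have hN1 : 1 ≤ N := by
    rcases Nat.eq_zero_or_pos N with h | h
    · exfalso; rw [h] at hN; rw [hx0] at hN; norm_num at hN
    · exact h
  set c := x (N - 1) with hcdef
  have hc1 : c < 1 := lt_of_le_of_ne (hrange _).2 (hmin (N - 1) (by omega))
  have hc0 : 0 ≤ c := (hrange _).1
  have hxge : ∀ k, N ≤ k → x k = 1 := fun k hk =>
    le_antisymm (hrange k).2 (hN ▸ hmono hk)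
  -- G 1 = 0
  have hG1 : G 1 = 0 := by rw [hG]; simp
  -- Integrability of p on (a, 1) for 0 ≤ a < 1
  obtain ⟨M, hM⟩ := (isCompact_Icc (a := (0:ℝ)) (b := A)).exists_bound_of_continuousOn
    (hcont.mono (fun z hz => ⟨by linarith [hz.1], lt_of_le_of_lt hz.2 hA.2⟩))
  have hintOoo : ∀ a ∈ Set.Ico (0:ℝ) 1, IntegrableOn p (Set.Ioo a 1) := by
    intro a ha
    have hsub : Set.Ioo a 1 ⊆ Set.Ioo (-1:ℝ) 1 :=
      fun z hz => ⟨by linarith [hz.1, ha.1], hz.2⟩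
    have hmeas : AEStronglyMeasurable p (volume.restrict (Set.Ioo a 1)) :=
      (hcont.mono hsub).aestronglyMeasurable measurableSet_Ioo
    refine ⟨hmeas, HasFiniteIntegral.restrict_of_bounded (C := max M (p A)) ?_ ?_⟩
    · simp [Real.volume_Ioo]
    · filter_upwards [ae_restrict_mem measurableSet_Ioo] with z hz
      rcases le_or_gt z A with hzA | hzA
      · exact le_trans (hM z ⟨le_trans ha.1 hz.1.le, hzA⟩) (le_max_left _ _)
      · have hpz : 0 < p z := hpos z (hsub hz)
        have : p z ≤ p A := hanti ⟨le_refl A, hA.2⟩ ⟨hzA.le, hz.2⟩ hzA.le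
        rw [Real.norm_eq_abs, abs_of_pos hpz]
        exact le_trans this (le_max_right _ _)
  have hint : ∀ a ∈ Set.Ico (0:ℝ) 1, IntervalIntegrable p volume a 1 := by
    intro a ha
    rw [intervalIntegrable_iff_integrableOn_Ioc_of_le ha.2.le,
      integrableOn_Ioc_iff_integrableOn_Ioo]
    exact hintOoo a ha
  -- positivity of G on [0,1)
  have hGpos : ∀ a ∈ Set.Ico (0:ℝ) 1, 0 < G a := by
    intro a ha
    rw [hG]
    exact intervalIntegral_pos_of_pos_on (hint a ha)
      (fun z hz => hpos z ⟨by linarith [hz.1, ha.1], hz.2⟩) ha.2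
  -- upper bound for G near 1
  have hGle : ∀ t ∈ Set.Ico A 1, G t ≤ (1 - t) * p t := by
    intro t ht
    have ht0 : (0:ℝ) ≤ t := le_trans hA.1.le ht.1
    rw [hG, intervalIntegral.integral_of_le ht.2.le, integral_Ioc_eq_integral_Ioo]
    calc ∫ z in Set.Ioo t 1, p z ≤ ∫ _z in Set.Ioo t 1, p t := by
          refine setIntegral_mono_on (hintOoo t ⟨ht0, ht.2⟩) ?_ measurableSet_Ioo ?_
          · exact integrableOn_const (by simp [Real.volume_Ioo])
          · intro z hz
            exact hanti ht ⟨le_trans ht.1 hz.1.le, hz.2⟩ hz.1.le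
      _ = (1 - t) * p t := by
          rw [setIntegral_const, measureReal_def, Real.volume_Ioo, ENNReal.toReal_ofReal (by linarith [ht.2] : (0:ℝ) ≤ 1 - t)]
          simp [smul_eq_mul]
  -- the key variational inequality
  have hkey : ∀ t ∈ Set.Ico c 1, (1 - t) * G c ≤ (1 + t) * G t := by
    intro t ht
    set y : ℕ → ℝ := fun k => if k = N then t else x k with hydef
    have hyN : y N = t := by simp [hydef]
    have hyne : ∀ k, k ≠ N → y k = x k := fun k hk => by simp [hydef, hk]
    have hy0 : y 0 = 0 := by rw [hyne 0 (by omega)]; exact hx0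
    have hymono : Monotone y := by
      apply monotone_nat_of_le_succ
      intro k
      rcases eq_or_ne k N with hk | hk
      · rw [hk, hyN, hyne (N + 1) (by omega), hxge (N + 1) (by omega)]
        exact ht.2.le
      · rcases eq_or_ne (k + 1) N with hk1 | hk1
        · rw [hyne k hk, hk1, hyN]
          have : k = N - 1 := by omega
          rw [this]
          exact ht.1
        · rw [hyne k hk, hyne (k + 1) hk1]
          exact hmono (Nat.le_succ k)
    have hyrange : ∀ k, y k ∈ Set.Icc (0:ℝ) 1 := by
      intro k
      rcases eq_or_ne k N with hk | hk
      · rw [hk, hyN]; exact ⟨le_trans hc0 ht.1, ht.2.le⟩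
      · rw [hyne k hk]; exact hrange k
    set fX : ℕ → ℝ := fun k => x (k + 1) * (G (x (k + 1)) + G (x k)) with hfX
    set fY : ℕ → ℝ := fun k => y (k + 1) * (G (y (k + 1)) + G (y k)) with hfY
    set d : ℕ → ℝ := fun k => fY k - fX k with hd
    have hd0 : ∀ k ∉ ({N - 1, N} : Finset ℕ), d k = 0 := by
      intro k hk
      simp only [Finset.mem_insert, Finset.mem_singleton, not_or] at hk
      have h1 : k + 1 ≠ N := by omega
      have h2 : k ≠ N := hk.2
      simp [hd, hfY, hfX, hyne _ h1, hyne _ h2]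
    have hdsum : Summable d := summable_of_ne_finset_zero hd0
    have hXsum : Summable fX := hsum
    have hYsum : Summable fY := by
      have : (fun k => fX k + d k) = fY := by
        funext k; simp [hd]
      rw [← this]
      exact hXsum.add hdsum
    have hle : ∑' k, fX k ≤ ∑' k, fY k := hopt y hy0 hymono hyrange hYsum
    have htsum : ∑' k, fY k = ∑' k, fX k + ∑' k, d k := by
      have h1 : ∑' k, fY k = ∑' k, (fX k + d k) := by
        apply tsum_congr; intro k; simp [hd]
      rw [h1, Summable.tsum_add hXsum hdsum]
    have hdval : 0 ≤ d (N - 1) + d N := by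
      have h2 : ∑' k, d k = d (N - 1) + d N := by
        rw [tsum_eq_sum hd0, Finset.sum_pair (by omega : N - 1 ≠ N)]
      linarith [htsum ▸ hle, h2]
    -- compute the two difference terms
    have hN1' : N - 1 + 1 = N := by omega
    have hdN1 : d (N - 1) = t * (G t + G c) - G c := by
      simp only [hd, hfY, hfX, hN1']
      rw [hyN, hyne (N - 1) (by omega), hN, hG1, ← hcdef]
      ring
    have hdN : d N = G t := by
      simp only [hd, hfY, hfX]
      rw [hyN, hyne (N + 1) (by omega), hxge (N + 1) (by omega), hN, hG1]
      ring
    rw [hdN1, hdN] at hdval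
    nlinarith [hdval]
  -- conclude: G c ≤ 2 p t for t near 1, hence G c ≤ 0
  have hB1 : max A c < 1 := max_lt hA.2 hc1
  have hev : ∀ᶠ t in nhdsWithin 1 (Set.Iio 1), G c ≤ 2 * p t := by
    have h1 : ∀ᶠ t in nhdsWithin 1 (Set.Iio 1), max A c < t :=
      eventually_nhdsWithin_of_eventually_nhds (eventually_gt_nhds hB1)
    filter_upwards [h1, self_mem_nhdsWithin] with t htB ht1
    have htA : A ≤ t := le_trans (le_max_left _ _) htB.le
    have htc : c ≤ t := le_trans (le_max_right _ _) htB.le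
    have ht1' : t < 1 := ht1
    have hGt : G t ≤ (1 - t) * p t := hGle t ⟨htA, ht1'⟩
    have hGt0 : 0 < G t := hGpos t ⟨le_trans hc0 htc, ht1'⟩
    have hkt : (1 - t) * G c ≤ (1 + t) * G t := hkey t ⟨htc, ht1'⟩
    have hpt0 : 0 < p t := hpos t ⟨by linarith [hA.1, htA], ht1'⟩
    have h2 : (1 + t) * G t ≤ 2 * G t := by nlinarith [hGt0, le_trans hc0 htc]
    have h3 : (1 - t) * G c ≤ 2 * ((1 - t) * p t) := by nlinarith
    have h4 : 0 < 1 - t := by linarith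
    nlinarith [h3, h4]
  have hle0 : G c ≤ 2 * 0 := ge_of_tendsto (hlim.const_mul 2) hev
  have := hGpos c ⟨hc0, hc1⟩
  linarith
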